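/- Consider the bilinear system over a field F: x₁y₂ + x₂y₃ = g₁, x₁y₁ + x₁y₃ = g₂, x₁y₂ − x₂y₁ = g₃. For every (g₁,g₂,g₃) ∈ F³ this system has a solution (x,y) ∈ F² × F³. -/

import Mathlib

theorem stmt_17 {F : Type*} [Field F] (g₁ g₂ g₃ : F) :
    ∃ x₁ x₂ y₁ y₂ y₃ : F,
      x₁ * y₂ + x₂ * y₃ = g₁ ∧ x₁ * y₁ + x₁ * y₃ = g₂ ∧ x₁ * y₂ - x₂ * y₁ = g₃ := by
  by_cases h : g₂ = 0
  · exact ⟨0, 1, -g₃, 0, g₁, by ring, by rw [h]; ring, by ring⟩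
  · exact ⟨1, (g₁ - g₃) / g₂, 0, g₃, g₂, by field_simp; ring, by ring, by ring⟩
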